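/- arXiv:0804.0027 — 2 statements merged into one kernel-verified Lean document; each statement's English description precedes it below -/
import Mathlib

section
/- Let G be a finite connected simple graph whose vertex set V is the union of two sets V₁ and V₂ with V₁ ∩ V₂ = {w} for a single vertex w, and suppose every edge of G has both endpoints in V₁ or both endpoints in V₂. Let e be an edge with both endpoints in V₁ and f an edge with both endpoints in V₂. Then: (i) there is no F ⊆ E(G)∖{e,f} such that both F∪{e} and F∪{f} are spanning trees of G (so X(G;e,f) = ∅); and (ii) for every weighting y : E(G) → ℝ, T_e^f(G;y)·T_f^e(G;y) = T_{ef}(G;y)·T^{ef}(G;y). -/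
open Finset

variable {V : Type*}

/-- `T` is (the edge set of) a spanning tree of `G`: `T ⊆ E(G)` and the spanning
subgraph `(V, T)` is connected and acyclic. -/
def IsSpanningTree (G : SimpleGraph V) (T : Finset (Sym2 V)) : Prop :=
  (T : Set (Sym2 V)) ⊆ G.edgeSet ∧
    (SimpleGraph.fromEdgeSet (T : Set (Sym2 V))).Connected ∧
    (SimpleGraph.fromEdgeSet (T : Set (Sym2 V))).IsAcyclic

/-- `y^S = ∏_{c ∈ S} y c`. -/
noncomputable def edgeWeight (y : Sym2 V → ℝ) (S : Finset (Sym2 V)) : ℝ :=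
  ∏ c ∈ S, y c

open Classical in
/-- `T_e^f(G;y) = Σ_{T : e ∈ T, f ∉ T} y^{T∖{e}}` over spanning trees `T`. -/
noncomputable def Tin_eOut_f [Fintype V] [DecidableEq V] (G : SimpleGraph V)
    (e f : Sym2 V) (y : Sym2 V → ℝ) : ℝ :=
  ∑ T ∈ univ.filter (fun T => IsSpanningTree G T ∧ e ∈ T ∧ f ∉ T),
    edgeWeight y (T.erase e)

open Classical in
/-- `T_{ef}(G;y) = Σ_{T : e ∈ T, f ∈ T} y^{T∖{e,f}}` over spanning trees `T`. -/
noncomputable def Tin_ef [Fintype V] [DecidableEq V] (G : SimpleGraph V)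
    (e f : Sym2 V) (y : Sym2 V → ℝ) : ℝ :=
  ∑ T ∈ univ.filter (fun T => IsSpanningTree G T ∧ e ∈ T ∧ f ∈ T),
    edgeWeight y ((T.erase e).erase f)

open Classical in
/-- `T^{ef}(G;y) = Σ_{T : e ∉ T, f ∉ T} y^{T}` over spanning trees `T`. -/
noncomputable def Tout_ef [Fintype V] [DecidableEq V] (G : SimpleGraph V)
    (e f : Sym2 V) (y : Sym2 V → ℝ) : ℝ :=
  ∑ T ∈ univ.filter (fun T => IsSpanningTree G T ∧ e ∉ T ∧ f ∉ T),
    edgeWeight y T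

/-- `F ∈ X(G;e,f)`: `F ⊆ E(G) ∖ {e,f}` and both `F ∪ {e}` and `F ∪ {f}` are
spanning trees of `G`. -/
def MemX [DecidableEq V] (G : SimpleGraph V) (e f : Sym2 V)
    (F : Finset (Sym2 V)) : Prop :=
  e ∉ F ∧ f ∉ F ∧ IsSpanningTree G (insert e F) ∧ IsSpanningTree G (insert f F)


section Aux

open SimpleGraph

/-- Any walk from inside `A` to outside `A` in a graph whose edges are either inside `A`
or touch `A` only at `w` must pass through `w`. -/
lemma walk_through_w {A : Set V} {w : V} {s : Set (Sym2 V)}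
    (hsep : ∀ c ∈ s, (∀ x ∈ c, x ∈ A) ∨ (∀ x ∈ c, x ∈ A → x = w)) :
    ∀ {a b : V} (q : (SimpleGraph.fromEdgeSet s).Walk a b), a ∈ A → b ∉ A → w ∈ q.support := by
  intro a b q
  induction q with
  | nil => intro ha hb; exact absurd ha hb
  | @cons u x _ h q ih =>
    intro ha hb
    rw [SimpleGraph.fromEdgeSet_adj] at h
    rcases hsep _ h.1 with h1 | h1
    · have hx : x ∈ A := h1 x (Sym2.mem_mk_right _ _)
      rw [SimpleGraph.Walk.support_cons]
      exact List.mem_cons_of_mem _ (ih hx hb)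
    · have huw : u = w := h1 u (Sym2.mem_mk_left _ _) ha
      rw [SimpleGraph.Walk.support_cons, ← huw]
      exact List.mem_cons_self

/-- From a walk to `w` in `fromEdgeSet T`, starting inside `A`, one gets reachability to `w`
using only the edges of `T` lying inside `A`. -/
lemma reach_w {A : Set V} {w : V} {T : Finset (Sym2 V)}
    [DecidablePred (fun c : Sym2 V => ∀ x ∈ c, x ∈ A)]
    (hsep : ∀ c ∈ T, ¬ (∀ x ∈ c, x ∈ A) → (∀ x ∈ c, x ∈ A → x = w)) :
    ∀ {a : V} (_ : (SimpleGraph.fromEdgeSet (T : Set (Sym2 V))).Walk a w), a ∈ A →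
      (SimpleGraph.fromEdgeSet ((T.filter (fun c => ∀ x ∈ c, x ∈ A)) : Set (Sym2 V))).Reachable a w := by
  intro a q
  induction q with
  | nil => intro _; exact SimpleGraph.Reachable.refl _
  | @cons u x _ h q ih =>
    intro ha
    rw [SimpleGraph.fromEdgeSet_adj] at h
    have hmem : s(u, x) ∈ T := h.1
    by_cases hP : ∀ z ∈ s(u, x), z ∈ A
    · have hx : x ∈ A := hP x (Sym2.mem_mk_right _ _)
      have hfil : s(u, x) ∈ T.filter (fun c => ∀ z ∈ c, z ∈ A) :=
        Finset.mem_filter.mpr ⟨hmem, hP⟩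
      have hadj : (SimpleGraph.fromEdgeSet
          ((T.filter (fun c => ∀ z ∈ c, z ∈ A)) : Set (Sym2 V))).Adj u x := by
        rw [SimpleGraph.fromEdgeSet_adj]
        exact ⟨Finset.mem_coe.mpr hfil, h.2⟩
      exact hadj.reachable.trans (ih hsep hx)
    · have huw := hsep _ hmem hP u (Sym2.mem_mk_left _ _) ha
      subst huw
      exact SimpleGraph.Reachable.refl _

/-- Every spanning tree has `|V| - 1` edges. -/
lemma spanningTree_card [Fintype V] [DecidableEq V] {G : SimpleGraph V} {T : Finset (Sym2 V)}
    (hT : IsSpanningTree G T) : T.card + 1 = Fintype.card V := by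
  classical
  haveI : Fintype ((SimpleGraph.fromEdgeSet (T : Set (Sym2 V))).edgeSet) :=
    (Set.toFinite _).fintype
  have htree : (SimpleGraph.fromEdgeSet (T : Set (Sym2 V))).IsTree := ⟨hT.2.1, hT.2.2⟩
  have hcard := htree.card_edgeFinset
  have hE : (SimpleGraph.fromEdgeSet (T : Set (Sym2 V))).edgeSet = (T : Set (Sym2 V)) := by
    rw [SimpleGraph.edgeSet_fromEdgeSet]
    ext c
    simp only [Set.mem_diff, Set.mem_setOf_eq, Finset.mem_coe, and_iff_left_iff_imp]
    intro hc
    exact G.not_isDiag_of_mem_edgeSet (hT.1 hc)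
  have hEF : (SimpleGraph.fromEdgeSet (T : Set (Sym2 V))).edgeFinset = T := by
    rw [SimpleGraph.edgeFinset, Set.toFinset_congr hE, Finset.toFinset_coe]
  rwa [hEF] at hcard

end Aux


section Swap

open SimpleGraph

open Classical in
/-- The key swap lemma: mixing the `V₁`-part of one spanning tree with the `V₂`-part of
another yields a spanning tree. -/
lemma swap_isSpanningTree [Fintype V] [DecidableEq V] {G : SimpleGraph V}
    (V₁ V₂ : Set V) (w : V) (hunion : V₁ ∪ V₂ = Set.univ) (hinter : V₁ ∩ V₂ = {w})
    (hedges : ∀ c ∈ G.edgeSet, (∀ x ∈ c, x ∈ V₁) ∨ (∀ x ∈ c, x ∈ V₂))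
    {T₁ T₂ : Finset (Sym2 V)} (h₁ : IsSpanningTree G T₁) (h₂ : IsSpanningTree G T₂) :
    IsSpanningTree G
      (T₁.filter (fun c => ∀ x ∈ c, x ∈ V₁) ∪ T₂.filter (fun c => ¬ ∀ x ∈ c, x ∈ V₁)) := by
  classical
  set P : Sym2 V → Prop := fun c => ∀ x ∈ c, x ∈ V₁ with hP
  set S : Finset (Sym2 V) := T₁.filter P ∪ T₂.filter (fun c => ¬ P c) with hS
  -- an edge of G cannot be inside both V₁ and V₂
  have hnotboth : ∀ c ∈ G.edgeSet, ¬ ((∀ x ∈ c, x ∈ V₁) ∧ (∀ x ∈ c, x ∈ V₂)) := by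
    intro c hc ⟨hc1, hc2⟩
    refine G.not_isDiag_of_mem_edgeSet hc ?_
    induction c using Sym2.ind with
    | _ x z =>
      have hx : x = w := by
        have : x ∈ V₁ ∩ V₂ := ⟨hc1 x (Sym2.mem_mk_left _ _), hc2 x (Sym2.mem_mk_left _ _)⟩
        rwa [hinter] at this
      have hz : z = w := by
        have : z ∈ V₁ ∩ V₂ := ⟨hc1 z (Sym2.mem_mk_right _ _), hc2 z (Sym2.mem_mk_right _ _)⟩
        rwa [hinter] at this
      rw [Sym2.mk_isDiag_iff, hx, hz]
  have hSsub : (S : Set (Sym2 V)) ⊆ G.edgeSet := by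
    intro c hc
    rcases Finset.mem_union.mp hc with h | h
    · exact h₁.1 (Finset.mem_filter.mp h).1
    · exact h₂.1 (Finset.mem_filter.mp h).1
  -- separation property for the edges of S
  have hsepS : ∀ c ∈ (S : Set (Sym2 V)),
      (∀ x ∈ c, x ∈ V₁) ∨ (∀ x ∈ c, x ∈ V₁ → x = w) := by
    intro c hc
    rcases Finset.mem_union.mp hc with h | h
    · exact Or.inl (Finset.mem_filter.mp h).2
    · right
      have hcE : c ∈ G.edgeSet := h₂.1 (Finset.mem_filter.mp h).1
      have hcV₂ : ∀ x ∈ c, x ∈ V₂ := by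
        rcases hedges c hcE with h' | h'
        · exact absurd h' (Finset.mem_filter.mp h).2
        · exact h'
      intro x hx hx1
      have : x ∈ V₁ ∩ V₂ := ⟨hx1, hcV₂ x hx⟩
      rwa [hinter] at this
  refine ⟨hSsub, ?_, ?_⟩
  · -- connectivity
    have hw : ∀ z : V, (SimpleGraph.fromEdgeSet (S : Set (Sym2 V))).Reachable z w := by
      intro z
      have hz : z ∈ V₁ ∪ V₂ := by rw [hunion]; trivial
      rcases hz with hz | hz
      · -- via T₁
        have hsep₁ : ∀ c ∈ T₁, ¬ (∀ x ∈ c, x ∈ V₁) → (∀ x ∈ c, x ∈ V₁ → x = w) := by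
          intro c hc hnc x hx hx1
          have hcE : c ∈ G.edgeSet := h₁.1 hc
          rcases hedges c hcE with h' | h'
          · exact absurd h' hnc
          · have : x ∈ V₁ ∩ V₂ := ⟨hx1, h' x hx⟩
            rwa [hinter] at this
        obtain ⟨q⟩ := h₁.2.1.preconnected z w
        refine (reach_w hsep₁ q hz).mono (SimpleGraph.fromEdgeSet_mono ?_)
        rw [hS]
        exact Finset.coe_subset.mpr Finset.subset_union_left
      · -- via T₂
        have hsep₂ : ∀ c ∈ T₂, ¬ (∀ x ∈ c, x ∈ V₂) → (∀ x ∈ c, x ∈ V₂ → x = w) := by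
          intro c hc hnc x hx hx2
          have hcE : c ∈ G.edgeSet := h₂.1 hc
          rcases hedges c hcE with h' | h'
          · have : x ∈ V₁ ∩ V₂ := ⟨h' x hx, hx2⟩
            rwa [hinter] at this
          · exact absurd h' hnc
        obtain ⟨q⟩ := h₂.2.1.preconnected z w
        refine (reach_w hsep₂ q hz).mono (SimpleGraph.fromEdgeSet_mono ?_)
        intro c hc
        have hc' := Finset.mem_filter.mp (Finset.mem_coe.mp hc)
        have hcE : c ∈ G.edgeSet := h₂.1 hc'.1
        have hnP : ¬ P c := fun hPc => hnotboth c hcE ⟨hPc, hc'.2⟩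
        exact Finset.mem_coe.mpr (Finset.mem_union_right _ (Finset.mem_filter.mpr ⟨hc'.1, hnP⟩))
    haveI : Nonempty V := h₁.2.1.nonempty
    exact ⟨fun u v => (hw u).trans (hw v).symm⟩
  · -- acyclicity
    intro v c hc
    by_cases hall : ∀ ε ∈ c.edges, P ε
    · -- cycle inside T₁
      have htr : ∀ ε ∈ c.edges, ε ∈ (SimpleGraph.fromEdgeSet (T₁ : Set (Sym2 V))).edgeSet := by
        intro ε hε
        have hεE := c.edges_subset_edgeSet hε
        rw [SimpleGraph.edgeSet_fromEdgeSet] at hεE ⊢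
        refine ⟨?_, hεE.2⟩
        rcases Finset.mem_union.mp (Finset.mem_coe.mp hεE.1) with h | h
        · exact Finset.mem_coe.mpr (Finset.mem_filter.mp h).1
        · exact absurd (hall ε hε) (Finset.mem_filter.mp h).2
      exact h₁.2.2 _ (hc.transfer htr)
    · by_cases hall2 : ∀ ε ∈ c.edges, ¬ P ε
      · -- cycle inside T₂
        have htr : ∀ ε ∈ c.edges, ε ∈ (SimpleGraph.fromEdgeSet (T₂ : Set (Sym2 V))).edgeSet := by
          intro ε hε
          have hεE := c.edges_subset_edgeSet hε
          rw [SimpleGraph.edgeSet_fromEdgeSet] at hεE ⊢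
          refine ⟨?_, hεE.2⟩
          rcases Finset.mem_union.mp (Finset.mem_coe.mp hεE.1) with h | h
          · exact absurd (Finset.mem_filter.mp h).2 (hall2 ε hε)
          · exact Finset.mem_coe.mpr (Finset.mem_filter.mp h).1
        exact h₂.2.2 _ (hc.transfer htr)
      · -- mixed cycle: impossible
        push_neg at hall hall2
        obtain ⟨α, hα, hαP⟩ := hall2
        obtain ⟨β, hβ, hβP⟩ := hall
        -- α : P-edge of the cycle; find endpoint u₁ ∈ V₁ \ {w}
        have hαnd : ¬ α.IsDiag :=
          G.not_isDiag_of_mem_edgeSet (hSsub (by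
            have := c.edges_subset_edgeSet hα
            rw [SimpleGraph.edgeSet_fromEdgeSet] at this
            exact this.1))
        have hβE : β ∈ G.edgeSet := hSsub (by
          have := c.edges_subset_edgeSet hβ
          rw [SimpleGraph.edgeSet_fromEdgeSet] at this
          exact this.1)
        have hβV₂ : ∀ x ∈ β, x ∈ V₂ := by
          rcases hedges β hβE with h' | h'
          · exact absurd h' hβP
          · exact h'
        obtain ⟨u₁, hu₁s, hu₁A, hu₁w⟩ : ∃ u₁, u₁ ∈ c.support ∧ u₁ ∈ V₁ ∧ u₁ ≠ w := by
          revert hα hαP hαnd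
          induction α using Sym2.ind with
          | _ x z =>
            intro hα hαP hαnd
            rw [Sym2.mk_isDiag_iff] at hαnd
            by_cases hxw : x = w
            · exact ⟨z, c.snd_mem_support_of_mem_edges hα,
                hαP z (Sym2.mem_mk_right _ _), fun hzw => hαnd (by rw [hxw, hzw])⟩
            · exact ⟨x, c.fst_mem_support_of_mem_edges hα,
                hαP x (Sym2.mem_mk_left _ _), hxw⟩
        obtain ⟨u₂, hu₂s, hu₂A, hu₂w⟩ : ∃ u₂, u₂ ∈ c.support ∧ u₂ ∈ V₂ ∧ u₂ ≠ w := by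
          have hβnd : ¬ β.IsDiag := G.not_isDiag_of_mem_edgeSet hβE
          revert hβ hβV₂ hβnd
          induction β using Sym2.ind with
          | _ x z =>
            intro hβ hβV₂ hβnd
            rw [Sym2.mk_isDiag_iff] at hβnd
            by_cases hxw : x = w
            · exact ⟨z, c.snd_mem_support_of_mem_edges hβ,
                hβV₂ z (Sym2.mem_mk_right _ _), fun hzw => hβnd (by rw [hxw, hzw])⟩
            · exact ⟨x, c.fst_mem_support_of_mem_edges hβ,
                hβV₂ x (Sym2.mem_mk_left _ _), hxw⟩
        have hu₂nA : u₂ ∉ V₁ := by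
          intro h
          exact hu₂w (by have : u₂ ∈ V₁ ∩ V₂ := ⟨h, hu₂A⟩; rwa [hinter] at this)
        -- rotate the cycle to start at u₁
        set c' := c.rotate u₁ hu₁s with hc'def
        have hc' : c'.IsCycle := hc.rotate hu₁s
        have hu₂' : u₂ ∈ c'.support := by
          have hnn : ¬ c.Nil := hc.not_nil
          have htail : u₂ ∈ c.support.tail := by
            cases c with
            | nil => exact absurd SimpleGraph.Walk.Nil.nil hnn
            | cons h q =>
              rw [SimpleGraph.Walk.support_cons, List.tail_cons]
              rw [SimpleGraph.Walk.support_cons] at hu₂s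
              rcases List.mem_cons.mp hu₂s with h' | h'
              · rw [h']; exact q.end_mem_support
              · exact h'
          have := (SimpleGraph.Walk.support_rotate c u₁ hu₁s).mem_iff.mpr htail
          exact List.mem_of_mem_tail this
        have hne : u₁ ≠ u₂ := fun h => hu₂nA (h ▸ hu₁A)
        set q₁ := c'.takeUntil u₂ hu₂' with hq₁def
        set q₂ := c'.dropUntil u₂ hu₂' with hq₂def
        have hw₁ : w ∈ q₁.support := walk_through_w hsepS q₁ hu₁A hu₂nA
        have hw₂ : w ∈ q₂.support := by
          have := walk_through_w hsepS q₂.reverse hu₁A hu₂nA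
          rwa [SimpleGraph.Walk.support_reverse, List.mem_reverse] at this
        have hnd := hc'.2
        rw [← SimpleGraph.Walk.take_spec c' hu₂', SimpleGraph.Walk.tail_support_append] at hnd
        have hw₁t : w ∈ q₁.support.tail := by
          have := q₁.support_eq_cons
          rw [this] at hw₁
          rcases List.mem_cons.mp hw₁ with h' | h'
          · exact absurd h'.symm hu₁w
          · exact h'
        have hw₂t : w ∈ q₂.support.tail := by
          have := q₂.support_eq_cons
          rw [this] at hw₂
          rcases List.mem_cons.mp hw₂ with h' | h'
          · exact absurd h'.symm hu₂w
          · exact h'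
        exact (List.disjoint_of_nodup_append hnd) hw₁t hw₂t

end Swap


section MainAux

lemma filterP_union_filterP [DecidableEq V] {p : Sym2 V → Prop} [DecidablePred p] (A B : Finset (Sym2 V)) :
    (A.filter p ∪ B.filter (fun c => ¬ p c)).filter p = A.filter p := by
  ext c
  simp only [Finset.mem_filter, Finset.mem_union]
  tauto

lemma filterP_union_filterQ [DecidableEq V] {p : Sym2 V → Prop} [DecidablePred p] (A B : Finset (Sym2 V)) :
    (A.filter p ∪ B.filter (fun c => ¬ p c)).filter (fun c => ¬ p c)
      = B.filter (fun c => ¬ p c) := by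
  ext c
  simp only [Finset.mem_filter, Finset.mem_union]
  tauto

lemma weight_swap [DecidableEq V] (y : Sym2 V → ℝ) {p : Sym2 V → Prop} [DecidablePred p]
    {T T' : Finset (Sym2 V)} {e f : Sym2 V}
    (hPe : p e) (hPf : ¬ p f) (heT : e ∈ T) (hfT : f ∉ T) (hfT' : f ∈ T') (heT' : e ∉ T') :
    edgeWeight y (T.erase e) * edgeWeight y (T'.erase f)
      = edgeWeight y (((T.filter p ∪ T'.filter (fun c => ¬ p c)).erase e).erase f)
        * edgeWeight y (T'.filter p ∪ T.filter (fun c => ¬ p c)) := by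
  have hd : ∀ {A B : Finset (Sym2 V)}, (∀ c ∈ A, p c) → (∀ c ∈ B, ¬ p c) → Disjoint A B := by
    intro A B hA hB
    rw [Finset.disjoint_left]
    intro c hc hc'
    exact hB c hc' (hA c hc)
  have h1 : T.erase e = (T.filter p).erase e ∪ T.filter (fun c => ¬ p c) := by
    ext c
    simp only [Finset.mem_erase, Finset.mem_union, Finset.mem_filter]
    constructor
    · rintro ⟨hce, hcT⟩
      by_cases hpc : p c
      · exact Or.inl ⟨hce, hcT, hpc⟩
      · exact Or.inr ⟨hcT, hpc⟩
    · rintro (⟨hce, hcT, _⟩ | ⟨hcT, hpc⟩)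
      · exact ⟨hce, hcT⟩
      · exact ⟨fun h => hpc (h ▸ hPe), hcT⟩
  have h2 : T'.erase f = T'.filter p ∪ (T'.filter (fun c => ¬ p c)).erase f := by
    ext c
    simp only [Finset.mem_erase, Finset.mem_union, Finset.mem_filter]
    constructor
    · rintro ⟨hcf, hcT⟩
      by_cases hpc : p c
      · exact Or.inl ⟨hcT, hpc⟩
      · exact Or.inr ⟨hcf, hcT, hpc⟩
    · rintro (⟨hcT, hpc⟩ | ⟨hcf, hcT, _⟩)
      · exact ⟨fun h => hPf (h ▸ hpc), hcT⟩
      · exact ⟨hcf, hcT⟩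
  have h3 : ((T.filter p ∪ T'.filter (fun c => ¬ p c)).erase e).erase f
      = (T.filter p).erase e ∪ (T'.filter (fun c => ¬ p c)).erase f := by
    ext c
    simp only [Finset.mem_erase, Finset.mem_union, Finset.mem_filter]
    constructor
    · rintro ⟨hcf, hce, h | h⟩
      · exact Or.inl ⟨hce, h⟩
      · exact Or.inr ⟨hcf, h⟩
    · rintro (⟨hce, hcT, hpc⟩ | ⟨hcf, hcT, hpc⟩)
      · exact ⟨fun h => hfT (h ▸ hcT), hce, Or.inl ⟨hcT, hpc⟩⟩
      · exact ⟨hcf, fun h => hpc (h ▸ hPe), Or.inr ⟨hcT, hpc⟩⟩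
  have d1 : Disjoint ((T.filter p).erase e) (T.filter (fun c => ¬ p c)) :=
    hd (fun c hc => (Finset.mem_filter.mp (Finset.erase_subset _ _ hc)).2)
       (fun c hc => (Finset.mem_filter.mp hc).2)
  have d2 : Disjoint (T'.filter p) ((T'.filter (fun c => ¬ p c)).erase f) :=
    hd (fun c hc => (Finset.mem_filter.mp hc).2)
       (fun c hc => (Finset.mem_filter.mp (Finset.erase_subset _ _ hc)).2)
  have d3 : Disjoint ((T.filter p).erase e) ((T'.filter (fun c => ¬ p c)).erase f) :=
    hd (fun c hc => (Finset.mem_filter.mp (Finset.erase_subset _ _ hc)).2)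
       (fun c hc => (Finset.mem_filter.mp (Finset.erase_subset _ _ hc)).2)
  have d4 : Disjoint (T'.filter p) (T.filter (fun c => ¬ p c)) :=
    hd (fun c hc => (Finset.mem_filter.mp hc).2)
       (fun c hc => (Finset.mem_filter.mp hc).2)
  rw [h1, h2, h3]
  simp only [edgeWeight]
  rw [Finset.prod_union d1, Finset.prod_union d2, Finset.prod_union d3, Finset.prod_union d4]
  ring

end MainAux


/-- If a connected graph `G` is the union of two subgraphs meeting in the single vertex `w`
(every edge lies inside `V₁` or inside `V₂`), `e` is an edge inside `V₁` and `f` is an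
edge inside `V₂`, then `X(G;e,f) = ∅` and `T_e^f · T_f^e = T_{ef} · T^{ef}`. -/
theorem cutVertex_X_empty [Fintype V] [DecidableEq V]
    (G : SimpleGraph V) (hG : G.Connected)
    (V₁ V₂ : Set V) (w : V) (hunion : V₁ ∪ V₂ = Set.univ) (hinter : V₁ ∩ V₂ = {w})
    (hedges : ∀ c ∈ G.edgeSet, (∀ x ∈ c, x ∈ V₁) ∨ (∀ x ∈ c, x ∈ V₂))
    (e f : Sym2 V) (heE : e ∈ G.edgeSet) (hfE : f ∈ G.edgeSet)
    (he : ∀ x ∈ e, x ∈ V₁) (hf : ∀ x ∈ f, x ∈ V₂)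
    (y : Sym2 V → ℝ) :
    (¬ ∃ F : Finset (Sym2 V), MemX G e f F) ∧
    Tin_eOut_f G e f y * Tin_eOut_f G f e y = Tin_ef G e f y * Tout_ef G e f y := by
  classical
  have hPf : ¬ ∀ x ∈ f, x ∈ V₁ := by
    intro hPf
    refine G.not_isDiag_of_mem_edgeSet hfE ?_
    revert hPf
    have hf' := hf
    revert hf'
    induction f using Sym2.ind with
    | _ x z =>
      intro hf' hPf
      have hx : x = w := by
        have : x ∈ V₁ ∩ V₂ := ⟨hPf x (Sym2.mem_mk_left _ _), hf' x (Sym2.mem_mk_left _ _)⟩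
        rwa [hinter] at this
      have hz : z = w := by
        have : z ∈ V₁ ∩ V₂ := ⟨hPf z (Sym2.mem_mk_right _ _), hf' z (Sym2.mem_mk_right _ _)⟩
        rwa [hinter] at this
      rw [Sym2.mk_isDiag_iff, hx, hz]
  have hef : e ≠ f := fun h => hPf (h ▸ he)
  constructor
  · -- part (i): X(G;e,f) = ∅
    rintro ⟨F, heF, hfF, hTe, hTf⟩
    have hswap := swap_isSpanningTree V₁ V₂ w hunion hinter hedges hTf hTe
    set S := (insert f F).filter (fun c => ∀ x ∈ c, x ∈ V₁)
        ∪ (insert e F).filter (fun c => ¬ ∀ x ∈ c, x ∈ V₁) with hSdef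
    have hsub : S ⊆ F := by
      intro c hc
      rcases Finset.mem_union.mp hc with h | h
      · obtain ⟨hcm, hcP⟩ := Finset.mem_filter.mp h
        rcases Finset.mem_insert.mp hcm with h' | h'
        · exact absurd (h' ▸ hcP) hPf
        · exact h'
      · obtain ⟨hcm, hcP⟩ := Finset.mem_filter.mp h
        rcases Finset.mem_insert.mp hcm with h' | h'
        · exact absurd (h' ▸ he) hcP
        · exact h'
    have h1 := spanningTree_card hswap
    have h2 := spanningTree_card hTe
    rw [Finset.card_insert_of_notMem heF] at h2
    have h3 := Finset.card_le_card hsub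
    omega
  · -- part (ii)
    simp only [Tin_eOut_f, Tin_ef, Tout_ef]
    rw [Finset.sum_mul_sum, Finset.sum_mul_sum, ← Finset.sum_product', ← Finset.sum_product']
    refine Finset.sum_nbij'
      (i := fun q => (q.1.filter (fun c => ∀ x ∈ c, x ∈ V₁)
          ∪ q.2.filter (fun c => ¬ ∀ x ∈ c, x ∈ V₁),
        q.2.filter (fun c => ∀ x ∈ c, x ∈ V₁)
          ∪ q.1.filter (fun c => ¬ ∀ x ∈ c, x ∈ V₁)))
      (j := fun q => (q.1.filter (fun c => ∀ x ∈ c, x ∈ V₁)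
          ∪ q.2.filter (fun c => ¬ ∀ x ∈ c, x ∈ V₁),
        q.2.filter (fun c => ∀ x ∈ c, x ∈ V₁)
          ∪ q.1.filter (fun c => ¬ ∀ x ∈ c, x ∈ V₁)))
      ?_ ?_ ?_ ?_ ?_
    · -- i maps into the target
      rintro ⟨T, T'⟩ hq
      rw [Finset.mem_product] at hq
      obtain ⟨hT, hT'⟩ := hq
      obtain ⟨hTtree, heT, hfT⟩ := (Finset.mem_filter.mp hT).2
      obtain ⟨hT'tree, hfT', heT'⟩ := (Finset.mem_filter.mp hT').2
      rw [Finset.mem_product]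
      constructor
      · refine Finset.mem_filter.mpr ⟨Finset.mem_univ _, ?_, ?_, ?_⟩
        · exact swap_isSpanningTree V₁ V₂ w hunion hinter hedges hTtree hT'tree
        · exact Finset.mem_union_left _ (Finset.mem_filter.mpr ⟨heT, he⟩)
        · exact Finset.mem_union_right _ (Finset.mem_filter.mpr ⟨hfT', hPf⟩)
      · refine Finset.mem_filter.mpr ⟨Finset.mem_univ _, ?_, ?_, ?_⟩
        · exact swap_isSpanningTree V₁ V₂ w hunion hinter hedges hT'tree hTtree
        · intro hmem
          rcases Finset.mem_union.mp hmem with h | h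
          · exact heT' (Finset.mem_filter.mp h).1
          · exact (Finset.mem_filter.mp h).2 he
        · intro hmem
          rcases Finset.mem_union.mp hmem with h | h
          · exact hPf (Finset.mem_filter.mp h).2
          · exact hfT (Finset.mem_filter.mp h).1
    · -- j maps back
      rintro ⟨S, S'⟩ hq
      rw [Finset.mem_product] at hq
      obtain ⟨hS, hS'⟩ := hq
      obtain ⟨hStree, heS, hfS⟩ := (Finset.mem_filter.mp hS).2
      obtain ⟨hS'tree, heS', hfS'⟩ := (Finset.mem_filter.mp hS').2
      rw [Finset.mem_product]
      constructor
      · refine Finset.mem_filter.mpr ⟨Finset.mem_univ _, ?_, ?_, ?_⟩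
        · exact swap_isSpanningTree V₁ V₂ w hunion hinter hedges hStree hS'tree
        · exact Finset.mem_union_left _ (Finset.mem_filter.mpr ⟨heS, he⟩)
        · intro hmem
          rcases Finset.mem_union.mp hmem with h | h
          · exact hPf (Finset.mem_filter.mp h).2
          · exact hfS' (Finset.mem_filter.mp h).1
      · refine Finset.mem_filter.mpr ⟨Finset.mem_univ _, ?_, ?_, ?_⟩
        · exact swap_isSpanningTree V₁ V₂ w hunion hinter hedges hS'tree hStree
        · exact Finset.mem_union_right _ (Finset.mem_filter.mpr ⟨hfS, hPf⟩)
        · intro hmem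
          rcases Finset.mem_union.mp hmem with h | h
          · exact heS' (Finset.mem_filter.mp h).1
          · exact (Finset.mem_filter.mp h).2 he
    · -- left inverse
      rintro ⟨T, T'⟩ _
      simp only [filterP_union_filterP, filterP_union_filterQ, Prod.mk.injEq]
      constructor <;> rw [Finset.filter_union_filter_not_eq]
    · -- right inverse
      rintro ⟨S, S'⟩ _
      simp only [filterP_union_filterP, filterP_union_filterQ, Prod.mk.injEq]
      constructor <;> rw [Finset.filter_union_filter_not_eq]
    · -- weights
      rintro ⟨T, T'⟩ hq
      rw [Finset.mem_product] at hq
      obtain ⟨hT, hT'⟩ := hq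
      obtain ⟨hTtree, heT, hfT⟩ := (Finset.mem_filter.mp hT).2
      obtain ⟨hT'tree, hfT', heT'⟩ := (Finset.mem_filter.mp hT').2
      exact weight_swap y he hPf heT hfT hfT' heT'
end

section
/- Let G be a finite connected simple graph with at least three vertices, and let v* be a vertex of degree 2 whose two incident edges are e = {a, v*} and f = {b, v*} (with a ≠ b). Orient e and f toward v*, i.e. take u₂ = v* as the head of e and w₂ = v* as the head of f. Then for every weighting y : E(G) → ℝ: (i) T^{ef}(G;y) = 0, i.e. no spanning tree of G avoids both e and f; (ii) X⁺(G;e,f;y) = 0; and (iii) T_e^f(G;y) = T_f^e(G;y) = X⁻(G;e,f;y) = Σ_{T'} y^{T'}, where T' ranges over sets T' ⊆ E(G)∖{e,f} for which (V∖{v*}, T') is a tree spanning V∖{v*} (that is, T' is a spanning tree of the induced subgraph G − v*). -/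
open Finset

variable {V : Type*}

open Classical in
/-- The generating polynomial of those `F ∈ X(G;e,f)` for which the vertices `p` and `q`
lie in the same component of `(V, F)`.  With `p = u₂` (head of `e`) and `q = w₁`
(tail of `f`) this is `X⁺(G;e,f;y)`; with `q = w₂` (head of `f`) it is `X⁻(G;e,f;y)`. -/
noncomputable def Xval [Fintype V] [DecidableEq V] (G : SimpleGraph V)
    (e f : Sym2 V) (p q : V) (y : Sym2 V → ℝ) : ℝ :=
  ∑ F ∈ univ.filter (fun F => MemX G e f F ∧
      (SimpleGraph.fromEdgeSet (F : Set (Sym2 V))).Reachable p q),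
    edgeWeight y F

/-- `(W, T)` is a tree spanning `W`: every edge of `T` has both endpoints in `W`, any
two vertices of `W` are joined by a path of edges of `T`, and `T` contains no cycle. -/
def IsTreeOn (W : Set V) (T : Finset (Sym2 V)) : Prop :=
  (∀ c ∈ T, ∀ x ∈ c, x ∈ W) ∧
  (∀ u ∈ W, ∀ v ∈ W, (SimpleGraph.fromEdgeSet (T : Set (Sym2 V))).Reachable u v) ∧
  (SimpleGraph.fromEdgeSet (T : Set (Sym2 V))).IsAcyclic



lemma isolated_reach [DecidableEq V] {v : V} {F : Finset (Sym2 V)}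
    (hF : ∀ c ∈ F, v ∉ c) {x : V}
    (h : (SimpleGraph.fromEdgeSet (F : Set (Sym2 V))).Reachable v x) : x = v := by
  obtain ⟨p⟩ := h
  cases p with
  | nil => rfl
  | cons h q =>
    rw [SimpleGraph.fromEdgeSet_adj] at h
    exact absurd (Sym2.mem_mk_left v _) (hF _ (Finset.mem_coe.mp h.1))

lemma edge_eq_of_mem_insert [DecidableEq V] {v c : V} {d : Sym2 V}
    {T' : Finset (Sym2 V)} (hT'v : ∀ d ∈ T', v ∉ d)
    (h : d ∈ insert (s(c, v)) (T' : Set (Sym2 V))) (hvd : v ∈ d) : d = s(c, v) := by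
  rcases Set.mem_insert_iff.mp h with h1 | h1
  · exact h1
  · exact absurd hvd (hT'v _ (Finset.mem_coe.mp h1))

lemma reach_of_walk [DecidableEq V] {v c : V} (hcv : c ≠ v)
    {T' : Finset (Sym2 V)} (hT'v : ∀ d ∈ T', v ∉ d) :
    ∀ (n : ℕ) (u w : V)
      (p : (SimpleGraph.fromEdgeSet (insert (s(c, v)) (T' : Set (Sym2 V)))).Walk u w),
      p.length = n → u ≠ v → w ≠ v →
      (SimpleGraph.fromEdgeSet (T' : Set (Sym2 V))).Reachable u w := by
  intro n
  induction n using Nat.strong_induction_on with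
  | _ n ih =>
    intro u w p hp hu hw
    cases p with
    | nil => exact SimpleGraph.Reachable.refl _
    | @cons _ x _ h q =>
      rw [SimpleGraph.fromEdgeSet_adj] at h
      by_cases hx : v = x
      · subst hx
        have huc : u = c := by
          have h1 := edge_eq_of_mem_insert hT'v h.1 (Sym2.mem_mk_right u v)
          rw [Sym2.eq_iff] at h1
          rcases h1 with ⟨h2, -⟩ | ⟨h2, -⟩
          · exact h2
          · exact absurd h2 hu
        cases q with
        | nil => exact absurd rfl hw
        | @cons _ x2 _ h2 r =>
          rw [SimpleGraph.fromEdgeSet_adj] at h2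
          have hx2 : x2 = c := by
            have h1 := edge_eq_of_mem_insert hT'v h2.1 (Sym2.mem_mk_left v x2)
            rw [Sym2.eq_iff] at h1
            rcases h1 with ⟨h3, h4⟩ | ⟨-, h4⟩
            · exact absurd h3.symm hcv
            · exact h4
          subst x2
          subst u
          refine ih r.length ?_ c w r rfl hcv hw
          simp only [SimpleGraph.Walk.length_cons] at hp
          omega
      · have hadj : (SimpleGraph.fromEdgeSet (T' : Set (Sym2 V))).Adj u x := by
          rw [SimpleGraph.fromEdgeSet_adj]
          refine ⟨?_, h.2⟩
          rcases Set.mem_insert_iff.mp h.1 with h1 | h1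
          · exfalso
            rw [Sym2.eq_iff] at h1
            rcases h1 with ⟨h2, h3⟩ | ⟨h2, h3⟩
            · exact hx h3.symm
            · exact hu h2
          · exact h1
        refine hadj.reachable.trans (ih q.length ?_ x w q rfl (fun h => hx h.symm) hw)
        simp only [SimpleGraph.Walk.length_cons] at hp
        omega

lemma no_cycle_at_v [DecidableEq V] {v c : V} (hcv : c ≠ v)
    {T' : Finset (Sym2 V)} (hT'v : ∀ d ∈ T', v ∉ d)
    (q : (SimpleGraph.fromEdgeSet (insert (s(c, v)) (T' : Set (Sym2 V)))).Walk v v) :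
    ¬ q.IsCycle := by
  intro hq
  cases q with
  | nil => exact hq.ne_nil rfl
  | @cons _ x _ h r =>
    rw [SimpleGraph.fromEdgeSet_adj] at h
    have hx : x = c := by
      have h1 := edge_eq_of_mem_insert hT'v h.1 (Sym2.mem_mk_left v x)
      rw [Sym2.eq_iff] at h1
      rcases h1 with ⟨h3, h4⟩ | ⟨-, h4⟩
      · exact absurd h3.symm hcv
      · exact h4
    subst x
    -- r : Walk c v, with c ≠ v
    have hnodup := hq.edges_nodup
    rw [SimpleGraph.Walk.edges_cons] at hnodup
    have hmem : s(v, c) ∈ r.edges := by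
      cases hrv : r.reverse with
      | nil => exact absurd rfl hcv
      | @cons _ x2 _ h2 r2 =>
        have h2' := h2
        rw [SimpleGraph.fromEdgeSet_adj] at h2'
        have hx2 : x2 = c := by
          have h1 := edge_eq_of_mem_insert hT'v h2'.1 (Sym2.mem_mk_left v x2)
          rw [Sym2.eq_iff] at h1
          rcases h1 with ⟨h3, h4⟩ | ⟨-, h4⟩
          · exact absurd h3.symm hcv
          · exact h4
        have : s(v, x2) ∈ r.reverse.edges := by
          rw [hrv, SimpleGraph.Walk.edges_cons]
          exact List.mem_cons_self
        rw [SimpleGraph.Walk.edges_reverse, List.mem_reverse] at this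
        rwa [hx2] at this
    exact (List.nodup_cons.mp hnodup).1 hmem

lemma acyclic_insert [DecidableEq V] {v c : V} (hcv : c ≠ v)
    {T' : Finset (Sym2 V)} (hT'v : ∀ d ∈ T', v ∉ d)
    (hac : (SimpleGraph.fromEdgeSet (T' : Set (Sym2 V))).IsAcyclic) :
    (SimpleGraph.fromEdgeSet (insert (s(c, v)) (T' : Set (Sym2 V)))).IsAcyclic := by
  intro x p hp
  by_cases he : s(c, v) ∈ p.edges
  · have hv : v ∈ p.support := SimpleGraph.Walk.snd_mem_support_of_mem_edges p he
    exact no_cycle_at_v hcv hT'v (p.rotate v hv) (hp.rotate hv)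
  · have hedges : ∀ d ∈ p.edges,
        d ∈ (SimpleGraph.fromEdgeSet (T' : Set (Sym2 V))).edgeSet := by
      intro d hd
      have h1 := p.edges_subset_edgeSet hd
      rw [SimpleGraph.edgeSet_fromEdgeSet] at h1 ⊢
      rcases Set.mem_insert_iff.mp h1.1 with h2 | h2
      · exact absurd (h2 ▸ hd) he
      · exact ⟨h2, h1.2⟩
    exact hac (p.transfer _ hedges) (hp.transfer hedges)

lemma key_iff [Fintype V] [DecidableEq V] {G : SimpleGraph V} {v c : V} (hcv : c ≠ v)
    {T' : Finset (Sym2 V)} (hT'E : (T' : Set (Sym2 V)) ⊆ G.edgeSet)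
    (hT'v : ∀ d ∈ T', v ∉ d) (hgE : s(c, v) ∈ G.edgeSet) :
    IsSpanningTree G (insert (s(c, v)) T') ↔ IsTreeOn ({v}ᶜ : Set V) T' := by
  have hco : ((insert (s(c, v)) T' : Finset (Sym2 V)) : Set (Sym2 V))
      = insert (s(c, v)) (T' : Set (Sym2 V)) := Finset.coe_insert _ _
  constructor
  · rintro ⟨hsub, hconn, hac⟩
    rw [hco] at hconn hac
    refine ⟨?_, ?_, ?_⟩
    · intro d hd x hx
      rw [Set.mem_compl_singleton_iff]
      intro hxv
      exact hT'v d hd (hxv ▸ hx)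
    · intro u hu w hw
      rw [Set.mem_compl_singleton_iff] at hu hw
      obtain ⟨p⟩ := hconn.preconnected u w
      exact reach_of_walk hcv hT'v p.length u w p rfl hu hw
    · have hle : SimpleGraph.fromEdgeSet (T' : Set (Sym2 V))
          ≤ SimpleGraph.fromEdgeSet (insert (s(c, v)) (T' : Set (Sym2 V))) :=
        SimpleGraph.fromEdgeSet_mono (Set.subset_insert _ _)
      intro x p hp
      exact hac (p.mapLe hle) (hp.mapLe hle)
  · rintro ⟨h1, h2, h3⟩
    refine ⟨?_, ?_, ?_⟩
    · rw [hco]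
      exact Set.insert_subset hgE hT'E
    · rw [hco, SimpleGraph.connected_iff]
      refine ⟨?_, ⟨c⟩⟩
      have hadj : (SimpleGraph.fromEdgeSet
          (insert (s(c, v)) (T' : Set (Sym2 V)))).Adj c v := by
        rw [SimpleGraph.fromEdgeSet_adj]
        exact ⟨Set.mem_insert _ _, hcv⟩
      have hle : SimpleGraph.fromEdgeSet (T' : Set (Sym2 V))
          ≤ SimpleGraph.fromEdgeSet (insert (s(c, v)) (T' : Set (Sym2 V))) :=
        SimpleGraph.fromEdgeSet_mono (Set.subset_insert _ _)
      have key : ∀ u, (SimpleGraph.fromEdgeSet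
          (insert (s(c, v)) (T' : Set (Sym2 V)))).Reachable u v := by
        intro u
        by_cases hu : u = v
        · subst hu; exact SimpleGraph.Reachable.refl _
        · have hr := h2 u (Set.mem_compl_singleton_iff.mpr hu)
            c (Set.mem_compl_singleton_iff.mpr hcv)
          exact (hr.mono hle).trans hadj.reachable
      intro u w
      exact (key u).trans (key w).symm
    · rw [hco]
      exact acyclic_insert hcv hT'v h3

open Classical in
/-- **Case 2 (iii) of the induction.**  Let `v` be a degree-2 vertex of the finite connected
simple graph `G` (with at least 3 vertices), with incident edges `e = s(a,v)` and
`f = s(b,v)`, both oriented towards `v` (heads `u₂ = v`, `w₂ = v`, so `w₁ = b`).  Then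
`T^{ef}(G;y) = 0`, `X⁺(G;e,f;y) = 0`, and
`T_e^f(G;y) = T_f^e(G;y) = X⁻(G;e,f;y) = T(G ∖ v; y)`,
the last being the generating polynomial of trees spanning `V ∖ {v}` by edges of
`E(G) ∖ {e,f}`. -/
theorem degree_two_vertex_reduction [Fintype V] [DecidableEq V]
    (G : SimpleGraph V) (hG : G.Connected) (hV : 3 ≤ Fintype.card V)
    (v a b : V) (hab : a ≠ b) (e f : Sym2 V)
    (he : e = s(a, v)) (hf : f = s(b, v))
    (heE : e ∈ G.edgeSet) (hfE : f ∈ G.edgeSet)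
    (hdeg : ∀ c ∈ G.edgeSet, v ∈ c → c = e ∨ c = f)
    (y : Sym2 V → ℝ) :
    Tout_ef G e f y = 0 ∧
    Xval G e f v b y = 0 ∧
    Tin_eOut_f G e f y =
      (∑ T' ∈ univ.filter (fun T' : Finset (Sym2 V) =>
        (T' : Set (Sym2 V)) ⊆ G.edgeSet \ {e, f} ∧ IsTreeOn ({v}ᶜ : Set V) T'),
        edgeWeight y T') ∧
    Tin_eOut_f G f e y =
      (∑ T' ∈ univ.filter (fun T' : Finset (Sym2 V) =>
        (T' : Set (Sym2 V)) ⊆ G.edgeSet \ {e, f} ∧ IsTreeOn ({v}ᶜ : Set V) T'),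
        edgeWeight y T') ∧
    Xval G e f v v y =
      (∑ T' ∈ univ.filter (fun T' : Finset (Sym2 V) =>
        (T' : Set (Sym2 V)) ⊆ G.edgeSet \ {e, f} ∧ IsTreeOn ({v}ᶜ : Set V) T'),
        edgeWeight y T') := by
  subst he hf
  have hav : a ≠ v := ((SimpleGraph.mem_edgeSet G).mp heE).ne
  have hbv : b ≠ v := ((SimpleGraph.mem_edgeSet G).mp hfE).ne
  have hef : s(a, v) ≠ s(b, v) := by
    rw [Ne, Sym2.eq_iff]
    rintro (⟨h, -⟩ | ⟨h, -⟩)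
    · exact hab h
    · exact hav h
  -- edges of a set avoiding e,f avoid v
  have avoidv : ∀ T : Finset (Sym2 V), (T : Set (Sym2 V)) ⊆ G.edgeSet →
      s(a, v) ∉ T → s(b, v) ∉ T → ∀ d ∈ T, v ∉ d := by
    intro T hTE heT hfT d hd hvd
    rcases hdeg d (hTE (Finset.mem_coe.mpr hd)) hvd with rfl | rfl
    · exact heT hd
    · exact hfT hd
  -- membership characterization for the RHS filter condition
  have hmemE : ∀ T : Finset (Sym2 V),
      (T : Set (Sym2 V)) ⊆ G.edgeSet \ {s(a, v), s(b, v)} →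
      (T : Set (Sym2 V)) ⊆ G.edgeSet ∧ s(a, v) ∉ T ∧ s(b, v) ∉ T := by
    intro T hT
    refine ⟨fun d hd => (hT hd).1, fun h => ?_, fun h => ?_⟩
    · exact (hT (Finset.mem_coe.mpr h)).2 (Set.mem_insert _ _)
    · exact (hT (Finset.mem_coe.mpr h)).2 (Set.mem_insert_iff.mpr (Or.inr rfl))
  refine ⟨?_, ?_, ?_, ?_, ?_⟩
  · -- Tout_ef = 0
    unfold Tout_ef
    refine Finset.sum_eq_zero fun T hT => ?_
    rw [Finset.mem_filter] at hT
    obtain ⟨-, ⟨hsub, hconn, -⟩, heT, hfT⟩ := hT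
    exact absurd (isolated_reach (avoidv T hsub heT hfT) (hconn.preconnected v a)) hav
  · -- Xval v b = 0
    unfold Xval
    refine Finset.sum_eq_zero fun F hF => ?_
    rw [Finset.mem_filter] at hF
    obtain ⟨-, ⟨heF, hfF, ⟨hsub, -, -⟩, -⟩, hreach⟩ := hF
    have hFE : (F : Set (Sym2 V)) ⊆ G.edgeSet := by
      intro d hd
      exact hsub (by rw [Finset.coe_insert]; exact Set.mem_insert_iff.mpr (Or.inr hd))
    exact absurd (isolated_reach (avoidv F hFE heF hfF) hreach) hbv
  · -- Tin_eOut_f e f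
    unfold Tin_eOut_f
    refine Finset.sum_nbij' (fun T => T.erase (s(a, v))) (fun T' => insert (s(a, v)) T')
      ?_ ?_ ?_ ?_ ?_
    · intro T hT
      rw [Finset.mem_filter] at hT ⊢
      obtain ⟨-, hST, heT, hfT⟩ := hT
      have hsubd : ((T.erase (s(a, v)) : Finset (Sym2 V)) : Set (Sym2 V))
          ⊆ G.edgeSet \ {s(a, v), s(b, v)} := by
        intro d hd
        rw [Finset.mem_coe, Finset.mem_erase] at hd
        refine ⟨hST.1 (Finset.mem_coe.mpr hd.2), ?_⟩
        rintro (rfl | rfl)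
        · exact hd.1 rfl
        · exact hfT hd.2
      obtain ⟨hTE', heT', hfT'⟩ := hmemE _ hsubd
      refine ⟨Finset.mem_univ _, hsubd, ?_⟩
      refine (key_iff hav hTE' (avoidv _ hTE' heT' hfT') heE).mp ?_
      rwa [Finset.insert_erase heT]
    · intro T' hT'
      rw [Finset.mem_filter] at hT' ⊢
      obtain ⟨-, hsubd, htree⟩ := hT'
      obtain ⟨hTE', heT', hfT'⟩ := hmemE _ hsubd
      refine ⟨Finset.mem_univ _,
        (key_iff hav hTE' (avoidv _ hTE' heT' hfT') heE).mpr htree,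
        Finset.mem_insert_self _ _, ?_⟩
      rw [Finset.mem_insert]
      rintro (h | h)
      · exact hef h.symm
      · exact hfT' h
    · intro T hT
      rw [Finset.mem_filter] at hT
      exact Finset.insert_erase hT.2.2.1
    · intro T' hT'
      rw [Finset.mem_filter] at hT'
      exact Finset.erase_insert (hmemE _ hT'.2.1).2.1
    · intro T hT
      rfl
  · -- Tin_eOut_f f e
    unfold Tin_eOut_f
    refine Finset.sum_nbij' (fun T => T.erase (s(b, v))) (fun T' => insert (s(b, v)) T')
      ?_ ?_ ?_ ?_ ?_
    · intro T hT
      rw [Finset.mem_filter] at hT ⊢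
      obtain ⟨-, hST, hfT, heT⟩ := hT
      have hsubd : ((T.erase (s(b, v)) : Finset (Sym2 V)) : Set (Sym2 V))
          ⊆ G.edgeSet \ {s(a, v), s(b, v)} := by
        intro d hd
        rw [Finset.mem_coe, Finset.mem_erase] at hd
        refine ⟨hST.1 (Finset.mem_coe.mpr hd.2), ?_⟩
        rintro (rfl | rfl)
        · exact heT hd.2
        · exact hd.1 rfl
      obtain ⟨hTE', heT', hfT'⟩ := hmemE _ hsubd
      refine ⟨Finset.mem_univ _, hsubd, ?_⟩
      refine (key_iff hbv hTE' (avoidv _ hTE' heT' hfT') hfE).mp ?_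
      rwa [Finset.insert_erase hfT]
    · intro T' hT'
      rw [Finset.mem_filter] at hT' ⊢
      obtain ⟨-, hsubd, htree⟩ := hT'
      obtain ⟨hTE', heT', hfT'⟩ := hmemE _ hsubd
      refine ⟨Finset.mem_univ _,
        (key_iff hbv hTE' (avoidv _ hTE' heT' hfT') hfE).mpr htree,
        Finset.mem_insert_self _ _, ?_⟩
      rw [Finset.mem_insert]
      rintro (h | h)
      · exact hef h
      · exact heT' h
    · intro T hT
      rw [Finset.mem_filter] at hT
      exact Finset.insert_erase hT.2.2.1
    · intro T' hT'
      rw [Finset.mem_filter] at hT'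
      exact Finset.erase_insert (hmemE _ hT'.2.1).2.2
    · intro T hT
      rfl
  · -- Xval v v
    unfold Xval
    refine Finset.sum_congr ?_ (fun _ _ => rfl)
    ext F
    simp only [Finset.mem_filter, Finset.mem_univ, true_and]
    constructor
    · rintro ⟨⟨heF, hfF, hTe, hTf⟩, -⟩
      have hFE : (F : Set (Sym2 V)) ⊆ G.edgeSet := by
        intro d hd
        exact hTe.1 (by rw [Finset.coe_insert]; exact Set.mem_insert_iff.mpr (Or.inr hd))
      have hFd : (F : Set (Sym2 V)) ⊆ G.edgeSet \ {s(a, v), s(b, v)} := by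
        intro d hd
        refine ⟨hFE hd, ?_⟩
        rintro (rfl | rfl)
        · exact heF (Finset.mem_coe.mp hd)
        · exact hfF (Finset.mem_coe.mp hd)
      exact ⟨hFd, (key_iff hav hFE (avoidv _ hFE heF hfF) heE).mp hTe⟩
    · rintro ⟨hFd, htree⟩
      obtain ⟨hFE, heF, hfF⟩ := hmemE _ hFd
      exact ⟨⟨heF, hfF,
        (key_iff hav hFE (avoidv _ hFE heF hfF) heE).mpr htree,
        (key_iff hbv hFE (avoidv _ hFE heF hfF) hfE).mpr htree⟩,
        SimpleGraph.Reachable.refl v⟩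
end
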